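/- arXiv:2102.13244 — 3 statements merged into one kernel-verified Lean document; each statement's English description precedes it below -/
import Mathlib

section
/- Fix t ≥ 1 and set u = (1/t², 1)ᵀ ∈ ℝ², v = (−t, 1/t)ᵀ ∈ ℝ², Q¹ = u uᵀ, Q² = v vᵀ. Let Q̂¹ = Q¹ and let Q̂² be Q² with its first row and column set to zero, so Q̂² = [[0, 0], [0, 1/t²]]. Then (i) u and v are orthogonal and ‖Q¹ + Q²‖ = max{‖u‖², ‖v‖²} = t² + 1/t², and (ii) ‖Q̂¹ + Q̂²‖ ≤ 1 + 1/t² + 1/t⁴. Consequently the ratio M/L := √(‖Q¹+Q²‖)/√(‖Q̂¹+Q̂²‖) tends to infinity as t → ∞. -/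
open scoped RealInnerProductSpace

/-- Operator norm of a square real matrix, viewed as a linear map on Euclidean space. -/
noncomputable def matOpNorm {d : ℕ} (Q : Matrix (Fin d) (Fin d) ℝ) : ℝ :=
  ‖Matrix.toEuclideanCLM (𝕜 := ℝ) Q‖

/-- The vector `u = (1/t², 1)ᵀ`. -/
noncomputable def uVec (t : ℝ) : EuclideanSpace ℝ (Fin 2) := WithLp.toLp 2 ![1 / t ^ 2, 1]

/-- The vector `v = (−t, 1/t)ᵀ`. -/
noncomputable def vVec (t : ℝ) : EuclideanSpace ℝ (Fin 2) := WithLp.toLp 2 ![-t, 1 / t]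

/-- `Q¹ = u uᵀ`. -/
noncomputable def Q1 (t : ℝ) : Matrix (Fin 2) (Fin 2) ℝ :=
  Matrix.vecMulVec (uVec t) (uVec t)

/-- `Q² = v vᵀ`. -/
noncomputable def Q2 (t : ℝ) : Matrix (Fin 2) (Fin 2) ℝ :=
  Matrix.vecMulVec (vVec t) (vVec t)

/-- `Q̂²`, i.e. `Q²` with its first row and column set to zero. -/
noncomputable def Q2hat (t : ℝ) : Matrix (Fin 2) (Fin 2) ℝ := !![0, 0; 0, 1 / t ^ 2]


section helper
lemma euc_apply (A : Matrix (Fin 2) (Fin 2) ℝ) (x : EuclideanSpace ℝ (Fin 2)) (i : Fin 2) :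
    (Matrix.toEuclideanCLM (𝕜 := ℝ) A) x i = A.mulVec x i := rfl

lemma euc_norm (x : EuclideanSpace ℝ (Fin 2)) : ‖x‖ = Real.sqrt (x 0 ^ 2 + x 1 ^ 2) := by
  rw [EuclideanSpace.norm_eq]
  simp [Fin.sum_univ_two, sq_abs]

lemma clm_norm_le (A : Matrix (Fin 2) (Fin 2) ℝ) (M : ℝ) (hM : 0 ≤ M)
    (h : ∀ x : Fin 2 → ℝ,
      (A.mulVec x 0) ^ 2 + (A.mulVec x 1) ^ 2 ≤ M ^ 2 * ((x 0) ^ 2 + (x 1) ^ 2)) :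
    ‖Matrix.toEuclideanCLM (𝕜 := ℝ) A‖ ≤ M := by
  apply ContinuousLinearMap.opNorm_le_bound _ hM
  intro x
  rw [euc_norm, euc_norm x,
    show M * Real.sqrt (x 0 ^ 2 + x 1 ^ 2) = Real.sqrt (M ^ 2 * (x 0 ^ 2 + x 1 ^ 2)) by
      rw [Real.sqrt_mul (sq_nonneg M), Real.sqrt_sq hM]]
  apply Real.sqrt_le_sqrt
  simpa [euc_apply] using h x

lemma clm_norm_ge (A : Matrix (Fin 2) (Fin 2) ℝ) (c : ℝ) (hc : 0 ≤ c)
    (x : EuclideanSpace ℝ (Fin 2)) (hx : x ≠ 0)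
    (h : A.mulVec x = c • (x : Fin 2 → ℝ)) : c ≤ ‖Matrix.toEuclideanCLM (𝕜 := ℝ) A‖ := by
  have h2 : (Matrix.toEuclideanCLM (𝕜 := ℝ) A) x = c • x := by
    ext i
    rw [euc_apply, h]
    rfl
  have h3 := (Matrix.toEuclideanCLM (𝕜 := ℝ) A).le_opNorm x
  rw [h2, norm_smul, Real.norm_eq_abs, abs_of_nonneg hc] at h3
  exact le_of_mul_le_mul_right h3 (norm_pos_iff.mpr hx)
end helper

section facts
variable {t : ℝ}

lemma mulvec12_0 (ht : t ≠ 0) (x : Fin 2 → ℝ) :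
    (Q1 t + Q2 t).mulVec x 0 = (t ^ 2 + 1 / t ^ 4) * x 0 + (1 / t ^ 2 - 1) * x 1 := by
  simp only [Q1, Q2, uVec, vVec, Matrix.mulVec, dotProduct, WithLp.ofLp_toLp, Matrix.vecMulVec_apply,
    Fin.sum_univ_two, Matrix.add_apply, Matrix.cons_val_zero, Matrix.cons_val_one,
    Matrix.head_cons]
  field_simp
  ring

lemma mulvec12_1 (ht : t ≠ 0) (x : Fin 2 → ℝ) :
    (Q1 t + Q2 t).mulVec x 1 = (1 / t ^ 2 - 1) * x 0 + (1 + 1 / t ^ 2) * x 1 := by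
  simp only [Q1, Q2, uVec, vVec, Matrix.mulVec, dotProduct, WithLp.ofLp_toLp, Matrix.vecMulVec_apply,
    Fin.sum_univ_two, Matrix.add_apply, Matrix.cons_val_zero, Matrix.cons_val_one,
    Matrix.head_cons]
  field_simp
  ring

lemma mulvecQ1_0 (x : Fin 2 → ℝ) :
    (Q1 t).mulVec x 0 = 1 / t ^ 4 * x 0 + 1 / t ^ 2 * x 1 := by
  simp only [Q1, uVec, Matrix.mulVec, dotProduct, WithLp.ofLp_toLp, Matrix.vecMulVec_apply,
    Fin.sum_univ_two, Matrix.cons_val_zero, Matrix.cons_val_one, Matrix.head_cons]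
  ring

lemma mulvecQ1_1 (x : Fin 2 → ℝ) :
    (Q1 t).mulVec x 1 = 1 / t ^ 2 * x 0 + x 1 := by
  simp only [Q1, uVec, Matrix.mulVec, dotProduct, WithLp.ofLp_toLp, Matrix.vecMulVec_apply,
    Fin.sum_univ_two, Matrix.cons_val_zero, Matrix.cons_val_one, Matrix.head_cons]
  ring

lemma mulvecQ2hat_0 (x : Fin 2 → ℝ) : (Q2hat t).mulVec x 0 = 0 := by
  simp only [Q2hat, Matrix.mulVec, dotProduct, WithLp.ofLp_toLp, Fin.sum_univ_two,
    Matrix.cons_val', Matrix.cons_val_zero, Matrix.cons_val_one, Matrix.head_cons,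
    Matrix.of_apply, Matrix.empty_val', Matrix.cons_val_fin_one, Matrix.head_fin_const]
  ring

lemma mulvecQ2hat_1 (x : Fin 2 → ℝ) : (Q2hat t).mulVec x 1 = 1 / t ^ 2 * x 1 := by
  simp only [Q2hat, Matrix.mulVec, dotProduct, WithLp.ofLp_toLp, Fin.sum_univ_two,
    Matrix.cons_val', Matrix.cons_val_zero, Matrix.cons_val_one, Matrix.head_cons,
    Matrix.of_apply, Matrix.empty_val', Matrix.cons_val_fin_one, Matrix.head_fin_const]
  ring

lemma norm_u_sq (ht : t ≠ 0) : ‖uVec t‖ ^ 2 = 1 / t ^ 4 + 1 := by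
  rw [euc_norm, Real.sq_sqrt (by positivity)]
  simp only [uVec, WithLp.ofLp_toLp, Matrix.cons_val_zero, Matrix.cons_val_one, Matrix.head_cons]
  field_simp

lemma norm_v_sq (ht : t ≠ 0) : ‖vVec t‖ ^ 2 = t ^ 2 + 1 / t ^ 2 := by
  rw [euc_norm, Real.sq_sqrt (by positivity)]
  simp only [vVec, WithLp.ofLp_toLp, Matrix.cons_val_zero, Matrix.cons_val_one, Matrix.head_cons]
  field_simp

end facts

section quad
variable {t : ℝ}

lemma quad1 (ht : 1 ≤ t) (x0 x1 : ℝ) :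
    ((t ^ 2 + 1 / t ^ 4) * x0 + (1 / t ^ 2 - 1) * x1) ^ 2 +
      ((1 / t ^ 2 - 1) * x0 + (1 + 1 / t ^ 2) * x1) ^ 2 ≤
      (t ^ 2 + 1 / t ^ 2) ^ 2 * (x0 ^ 2 + x1 ^ 2) := by
  have ht0 : (0:ℝ) < t := lt_of_lt_of_le one_pos ht
  have hne : t ≠ 0 := ne_of_gt ht0
  have hid : (t ^ 2 + 1 / t ^ 2) ^ 2 * (x0 ^ 2 + x1 ^ 2) =
      ((t ^ 2 + 1 / t ^ 4) * x0 + (1 / t ^ 2 - 1) * x1) ^ 2 +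
      ((1 / t ^ 2 - 1) * x0 + (1 + 1 / t ^ 2) * x1) ^ 2 +
      (t ^ 4 - 1 / t ^ 4) * (x0 / t ^ 2 + x1) ^ 2 := by
    field_simp
    ring
  have h4 : 1 / t ^ 4 ≤ 1 := by
    rw [div_le_one (by positivity)]
    nlinarith [one_le_pow₀ ht (n := 4)]
  have h5 : (1:ℝ) ≤ t ^ 4 := one_le_pow₀ ht
  have hnn : 0 ≤ (t ^ 4 - 1 / t ^ 4) * (x0 / t ^ 2 + x1) ^ 2 :=
    mul_nonneg (by linarith) (sq_nonneg _)
  linarith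

lemma quadQ1 (ht : t ≠ 0) (x0 x1 : ℝ) :
    (1 / t ^ 4 * x0 + 1 / t ^ 2 * x1) ^ 2 + (1 / t ^ 2 * x0 + x1) ^ 2 ≤
      (1 + 1 / t ^ 4) ^ 2 * (x0 ^ 2 + x1 ^ 2) := by
  have hid : (1 + 1 / t ^ 4) ^ 2 * (x0 ^ 2 + x1 ^ 2) =
      (1 / t ^ 4 * x0 + 1 / t ^ 2 * x1) ^ 2 + (1 / t ^ 2 * x0 + x1) ^ 2 +
      (1 + 1 / t ^ 4) * (x0 - x1 / t ^ 2) ^ 2 := by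
    field_simp
    ring
  have hnn : 0 ≤ (1 + 1 / t ^ 4) * (x0 - x1 / t ^ 2) ^ 2 :=
    mul_nonneg (by positivity) (sq_nonneg _)
  linarith

lemma eig_v (ht : 1 ≤ t) :
    (Q1 t + Q2 t).mulVec (vVec t) =
      (t ^ 2 + 1 / t ^ 2) • ((vVec t : Fin 2 → ℝ)) := by
  have hne : t ≠ 0 := by intro h; rw [h] at ht; linarith
  funext i
  fin_cases i
  · show (Q1 t + Q2 t).mulVec (vVec t) 0 = ((t ^ 2 + 1 / t ^ 2) • (vVec t : Fin 2 → ℝ)) 0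
    rw [mulvec12_0 hne]
    simp only [vVec, WithLp.ofLp_toLp, Pi.smul_apply, smul_eq_mul, Matrix.cons_val_zero, Matrix.cons_val_one,
      Matrix.head_cons]
    field_simp
    ring
  · show (Q1 t + Q2 t).mulVec (vVec t) 1 = ((t ^ 2 + 1 / t ^ 2) • (vVec t : Fin 2 → ℝ)) 1
    rw [mulvec12_1 hne]
    simp only [vVec, WithLp.ofLp_toLp, Pi.smul_apply, smul_eq_mul, Matrix.cons_val_zero, Matrix.cons_val_one,
      Matrix.head_cons]
    field_simp
    ring

lemma vVec_ne (ht : 1 ≤ t) : vVec t ≠ 0 := by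
  intro h
  have h0 : vVec t 0 = 0 := by rw [h]; rfl
  simp only [vVec, WithLp.ofLp_toLp, Matrix.cons_val_zero, neg_eq_zero] at h0
  linarith

end quad

section final
variable {t : ℝ}

lemma opnorm12 (ht : 1 ≤ t) : matOpNorm (Q1 t + Q2 t) = t ^ 2 + 1 / t ^ 2 := by
  have ht0 : (0:ℝ) < t := lt_of_lt_of_le one_pos ht
  have hne : t ≠ 0 := ne_of_gt ht0
  unfold matOpNorm
  apply le_antisymm
  · apply clm_norm_le _ _ (by positivity)
    intro x
    rw [mulvec12_0 hne, mulvec12_1 hne]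
    exact quad1 ht (x 0) (x 1)
  · exact clm_norm_ge _ _ (by positivity) (vVec t) (vVec_ne ht) (eig_v ht)

lemma opnormhat_le (ht : 1 ≤ t) :
    matOpNorm (Q1 t + Q2hat t) ≤ 1 + 1 / t ^ 2 + 1 / t ^ 4 := by
  have ht0 : (0:ℝ) < t := lt_of_lt_of_le one_pos ht
  have hne : t ≠ 0 := ne_of_gt ht0
  unfold matOpNorm
  rw [map_add]
  refine le_trans (norm_add_le _ _) ?_
  have h1 : ‖Matrix.toEuclideanCLM (𝕜 := ℝ) (Q1 t)‖ ≤ 1 + 1 / t ^ 4 := by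
    apply clm_norm_le _ _ (by positivity)
    intro x
    rw [mulvecQ1_0, mulvecQ1_1]
    exact quadQ1 hne (x 0) (x 1)
  have h2 : ‖Matrix.toEuclideanCLM (𝕜 := ℝ) (Q2hat t)‖ ≤ 1 / t ^ 2 := by
    apply clm_norm_le _ _ (by positivity)
    intro x
    rw [mulvecQ2hat_0, mulvecQ2hat_1]
    nlinarith [mul_nonneg (sq_nonneg (1 / t ^ 2)) (sq_nonneg (x 0))]
  linarith

lemma one_le_hat (ht : 1 ≤ t) : 1 ≤ matOpNorm (Q1 t + Q2hat t) := by
  have ht0 : (0:ℝ) < t := lt_of_lt_of_le one_pos ht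
  have hne : t ≠ 0 := ne_of_gt ht0
  set e : EuclideanSpace ℝ (Fin 2) := WithLp.toLp 2 ![0, 1] with he
  have hnorm : ‖e‖ = 1 := by
    rw [euc_norm]
    norm_num [he]
  have h3 := (Matrix.toEuclideanCLM (𝕜 := ℝ) (Q1 t + Q2hat t)).le_opNorm e
  rw [hnorm, mul_one] at h3
  refine le_trans ?_ h3
  rw [euc_norm]
  simp only [euc_apply]
  have hm0 : (Q1 t + Q2hat t).mulVec e 0 = 1 / t ^ 2 := by
    rw [Matrix.add_mulVec]
    have := mulvecQ1_0 (t := t) e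
    have := mulvecQ2hat_0 (t := t) e
    simp only [Pi.add_apply, mulvecQ1_0, mulvecQ2hat_0, he]
    norm_num
  have hm1 : (Q1 t + Q2hat t).mulVec e 1 = 1 + 1 / t ^ 2 := by
    rw [Matrix.add_mulVec]
    simp only [Pi.add_apply, mulvecQ1_1, mulvecQ2hat_1, he]
    norm_num
  rw [hm0, hm1]
  have h9 : Real.sqrt 1 ≤ Real.sqrt ((1 / t ^ 2) ^ 2 + (1 + 1 / t ^ 2) ^ 2) :=
    Real.sqrt_le_sqrt (by nlinarith [sq_nonneg (1 / t ^ 2), div_pos one_pos (pow_pos ht0 2)])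
  simpa using h9

lemma inner_uv (ht : 1 ≤ t) : ⟪uVec t, vVec t⟫ = 0 := by
  have hne : t ≠ 0 := by intro h; rw [h] at ht; linarith
  simp only [PiLp.inner_apply, RCLike.inner_apply, conj_trivial, Fin.sum_univ_two, uVec, vVec, WithLp.ofLp_toLp,
    Matrix.cons_val_zero, Matrix.cons_val_one, Matrix.head_cons]
  field_simp
  ring

lemma max_uv (ht : 1 ≤ t) :
    max (‖uVec t‖ ^ 2) (‖vVec t‖ ^ 2) = t ^ 2 + 1 / t ^ 2 := by
  have ht0 : (0:ℝ) < t := lt_of_lt_of_le one_pos ht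
  have hne : t ≠ 0 := ne_of_gt ht0
  rw [norm_u_sq hne, norm_v_sq hne, max_eq_right]
  have key : t ^ 2 + 1 / t ^ 2 - (1 / t ^ 4 + 1) = (t ^ 2 - 1) * (t ^ 4 + 1) / t ^ 4 := by
    field_simp
    ring
  have h2 : (0:ℝ) ≤ (t ^ 2 - 1) * (t ^ 4 + 1) / t ^ 4 :=
    div_nonneg (mul_nonneg (by nlinarith) (by positivity)) (by positivity)
  linarith

end final

/-- **Statement 3.** For `t ≥ 1`: (i) `u ⊥ v` and `‖Q¹ + Q²‖ = max{‖u‖², ‖v‖²} = t² + 1/t²`;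
(ii) `‖Q̂¹ + Q̂²‖ ≤ 1 + 1/t² + 1/t⁴` (here `Q̂¹ = Q¹`). Consequently, the ratio
`M/L = √‖Q¹+Q²‖ / √‖Q̂¹+Q̂²‖` tends to infinity as `t → ∞`. -/
theorem stmt3 :
    (∀ t : ℝ, 1 ≤ t →
      ⟪uVec t, vVec t⟫ = 0 ∧
      matOpNorm (Q1 t + Q2 t) = max (‖uVec t‖ ^ 2) (‖vVec t‖ ^ 2) ∧
      max (‖uVec t‖ ^ 2) (‖vVec t‖ ^ 2) = t ^ 2 + 1 / t ^ 2 ∧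
      matOpNorm (Q1 t + Q2hat t) ≤ 1 + 1 / t ^ 2 + 1 / t ^ 4) ∧
    Filter.Tendsto
      (fun t : ℝ => Real.sqrt (matOpNorm (Q1 t + Q2 t)) / Real.sqrt (matOpNorm (Q1 t + Q2hat t)))
      Filter.atTop Filter.atTop := by
  
  constructor
  · intro t ht
    exact ⟨inner_uv ht, by rw [opnorm12 ht, max_uv ht], max_uv ht, opnormhat_le ht⟩
  · have hs3 : (0:ℝ) < Real.sqrt 3 := Real.sqrt_pos.mpr (by norm_num)
    apply Filter.tendsto_atTop_mono' _ _
      (Filter.Tendsto.atTop_div_const hs3 Filter.tendsto_id)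
    filter_upwards [Filter.eventually_ge_atTop (1:ℝ)] with t ht
    have ht0 : (0:ℝ) < t := lt_of_lt_of_le one_pos ht
    have hL1 : (1:ℝ) ≤ matOpNorm (Q1 t + Q2hat t) := one_le_hat ht
    have hL3 : matOpNorm (Q1 t + Q2hat t) ≤ 3 := by
      have h1 : 1 / t ^ 2 ≤ 1 := by
        rw [div_le_one (by positivity)]
        nlinarith
      have h2 : 1 / t ^ 4 ≤ 1 := by
        rw [div_le_one (by positivity)]
        nlinarith [one_le_pow₀ ht (n := 4)]
      linarith [opnormhat_le ht]
    have hnum : t ≤ Real.sqrt (matOpNorm (Q1 t + Q2 t)) := by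
      rw [opnorm12 ht]
      have : Real.sqrt (t ^ 2) ≤ Real.sqrt (t ^ 2 + 1 / t ^ 2) :=
        Real.sqrt_le_sqrt (by have h0 : (0:ℝ) ≤ 1 / t ^ 2 := by positivity
                              linarith)
      rwa [Real.sqrt_sq ht0.le] at this
    have hden_pos : (0:ℝ) < Real.sqrt (matOpNorm (Q1 t + Q2hat t)) :=
      Real.sqrt_pos.mpr (by linarith)
    have hden_le : Real.sqrt (matOpNorm (Q1 t + Q2hat t)) ≤ Real.sqrt 3 :=
      Real.sqrt_le_sqrt hL3
    calc (fun x : ℝ => x / Real.sqrt 3) t = t / Real.sqrt 3 := rfl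
      _ ≤ Real.sqrt (matOpNorm (Q1 t + Q2 t)) / Real.sqrt (matOpNorm (Q1 t + Q2hat t)) :=
        div_le_div₀ (Real.sqrt_nonneg _) hnum hden_pos hden_le
end

section
/- Let γ ≥ 0 and L > 0, and define the sequences a_k and A_k by A₀ = 0 and, for k ≥ 1, a_k = (1 + γ A_{k−1})/(2L), A_k = A_{k−1} + a_k. Then for every k ≥ 1, A_k ≥ k/(2L) and A_k ≥ (1/(2L))·(1 + γ/(2L))^{k−1}; hence A_k ≥ max{k/(2L), (1/(2L))(1 + γ/(2L))^{k−1}}. -/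
/-- **Statement 7.** With `A₀ = 0` and, for `k ≥ 1`, `a_k = (1 + γ A_{k−1})/(2L)` and
`A_k = A_{k−1} + a_k` (where `γ ≥ 0`, `L > 0`), one has, for every `k ≥ 1`,
`A_k ≥ k/(2L)` and `A_k ≥ (1/(2L))(1 + γ/(2L))^{k−1}`; hence `A_k` is at least the
maximum of the two. -/
theorem stmt7 (γ L : ℝ) (hγ : 0 ≤ γ) (hL : 0 < L)
    (a A : ℕ → ℝ) (ha0 : a 0 = 0) (hA0 : A 0 = 0)
    (ha : ∀ k : ℕ, a (k + 1) = (1 + γ * A k) / (2 * L))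
    (hA : ∀ k : ℕ, A (k + 1) = A k + a (k + 1)) :
    ∀ k : ℕ, 1 ≤ k →
      A k ≥ (k : ℝ) / (2 * L) ∧
      A k ≥ (1 / (2 * L)) * (1 + γ / (2 * L)) ^ (k - 1) ∧
      A k ≥ max ((k : ℝ) / (2 * L)) ((1 / (2 * L)) * (1 + γ / (2 * L)) ^ (k - 1)) := by
  have hL2 : (0:ℝ) < 2 * L := by linarith
  have hrec : ∀ k : ℕ, A (k + 1) = A k * (1 + γ / (2 * L)) + 1 / (2 * L) := by
    intro k
    rw [hA, ha]
    field_simp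
    ring
  have key : ∀ k : ℕ, 1 ≤ k →
      A k ≥ (k : ℝ) / (2 * L) ∧ A k ≥ (1 / (2 * L)) * (1 + γ / (2 * L)) ^ (k - 1) := by
    intro k hk
    induction k with
    | zero => omega
    | succ n ih =>
      rcases Nat.eq_zero_or_pos n with hn | hn
      · subst hn
        constructor
        · rw [hrec, hA0]
          simp
        · rw [hrec, hA0]
          simp
      · obtain ⟨h1, h2⟩ := ih hn
        have hq : (1:ℝ) ≤ 1 + γ / (2 * L) := by
          have := div_nonneg hγ hL2.le; linarith
        have hApos : 0 ≤ A n := le_trans (by positivity) h1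
        constructor
        · rw [hrec]
          have : A n * (1 + γ / (2 * L)) ≥ A n := by nlinarith
          push_cast
          have : ((n:ℝ) + 1) / (2 * L) = (n:ℝ) / (2*L) + 1/(2*L) := by ring
          rw [this]
          have h3 : A n * (1 + γ / (2 * L)) ≥ (n:ℝ)/(2*L) := by nlinarith
          linarith
        · rw [hrec]
          have hn1 : n + 1 - 1 = (n - 1) + 1 := by omega
          rw [hn1, pow_succ]
          have hqpos : (0:ℝ) ≤ 1 + γ / (2 * L) := by linarith
          have h3 : A n * (1 + γ / (2 * L)) ≥
              (1 / (2 * L)) * (1 + γ / (2 * L)) ^ (n - 1) * (1 + γ / (2 * L)) := by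
            exact mul_le_mul_of_nonneg_right h2 hqpos
          have h4 : (0:ℝ) < 1 / (2*L) := by positivity
          linarith
  intro k hk
  obtain ⟨h1, h2⟩ := key k hk
  exact ⟨h1, h2, max_le h1 h2⟩
end

section
/- Consider the CODER iteration: x₋₁ = x₀ ∈ ℝ^d, p₀ = F(x₀), a₀ = A₀ = 0, and for k ≥ 1: a_k = (1+γA_{k−1})/(2L), A_k = A_{k−1} + a_k; for i = 1,…,m in order, p_kⁱ = Fⁱ(x_k¹,…,x_k^{i−1}, x_{k−1}ⁱ,…,x_{k−1}ᵐ), q_kⁱ = p_kⁱ + (a_{k−1}/a_k)(Fⁱ(x_{k−1}) − p_{k−1}ⁱ), and x_kⁱ is the minimizer over ℝ^{dⁱ} of ψ_kⁱ(xⁱ) = ∑_{j=1}^k a_j(⟨q_jⁱ, xⁱ⟩ + gⁱ(xⁱ)) + ½‖xⁱ − x₀ⁱ‖². Then (Lemma 2) for every u ∈ ℝ^d and k ≥ 1, with ψ_k(x; u) := ∑_{j=1}^k a_j(⟨q_j, x − u⟩ + g(x) − g(u)) + ½‖x − x₀‖²: ψ_k(x_k; u) ≥ ∑_{j=1}^k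 a_j(⟨F(x_j), x_j − u⟩ + g(x_j) − g(u)) − ((1+γA_k)/4)‖u − x_k‖² + ∑_{j=1}^k [ ((1+γA_{j−1})/4)‖x_j − x_{j−1}‖² − (a_j²/(1+γA_j))‖F(x_j) − p_j‖² ]. -/
open scoped RealInnerProductSpace

private lemma convexOn_sum' {ι E : Type*} [AddCommMonoid E] [Module ℝ E]
    (t : Finset ι) (f : ι → E → ℝ) (h : ∀ i ∈ t, ConvexOn ℝ Set.univ (f i)) :
    ConvexOn ℝ Set.univ (fun z => ∑ i ∈ t, f i z) := by
  classical
  induction t using Finset.cons_induction with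
  | empty => simpa using convexOn_const (0 : ℝ) convex_univ
  | cons i t hi ih =>
      simp only [Finset.sum_cons]
      exact (h i (Finset.mem_cons_self i t)).add
        (ih fun j hj => h j (Finset.mem_cons_of_mem hj))

private lemma convexOn_affine' {E : Type*} [NormedAddCommGroup E] [InnerProductSpace ℝ E]
    (w : E) (b : ℝ) : ConvexOn ℝ Set.univ (fun z => ⟪w, z⟫ + b) := by
  refine ⟨convex_univ, fun x _ y _ s t hs ht hst => le_of_eq ?_⟩
  simp only [inner_add_right, real_inner_smul_right, smul_eq_mul]
  linear_combination (-b) * hst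

private lemma young' {E : Type*} [NormedAddCommGroup E] [InnerProductSpace ℝ E]
    (μ c : ℝ) (hμ : 0 < μ) (v w : E) :
    0 ≤ c ^ 2 / μ * ‖v‖ ^ 2 + c * ⟪v, w⟫ + μ / 4 * ‖w‖ ^ 2 := by
  have hcs := abs_real_inner_le_norm v w
  have h1 : -(|c| * ‖v‖ * ‖w‖) ≤ c * ⟪v, w⟫ := by
    have := abs_le.1 (by
      calc |c * ⟪v, w⟫| = |c| * |⟪v, w⟫| := abs_mul _ _
        _ ≤ |c| * (‖v‖ * ‖w‖) := by
            exact mul_le_mul_of_nonneg_left hcs (abs_nonneg c)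
        _ = |c| * ‖v‖ * ‖w‖ := by ring)
    linarith [this.1]
  have main : 0 ≤ c ^ 2 * ‖v‖ ^ 2 + μ * (c * ⟪v, w⟫) + μ ^ 2 / 4 * ‖w‖ ^ 2 := by
    nlinarith [sq_nonneg (|c| * ‖v‖ - μ / 2 * ‖w‖), sq_abs c,
      mul_le_mul_of_nonneg_left h1 hμ.le, norm_nonneg w, norm_nonneg v]
  have heq : c ^ 2 / μ * ‖v‖ ^ 2 + c * ⟪v, w⟫ + μ / 4 * ‖w‖ ^ 2
      = (c ^ 2 * ‖v‖ ^ 2 + μ * (c * ⟪v, w⟫) + μ ^ 2 / 4 * ‖w‖ ^ 2) / μ := by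
    field_simp
  rw [heq]
  exact div_nonneg main hμ.le

private lemma strong_min' {E : Type*} [NormedAddCommGroup E] [InnerProductSpace ℝ E]
    (f : E → ℝ) (μ : ℝ) (hμ : 0 ≤ μ)
    (hconv : ConvexOn ℝ Set.univ (fun z => f z - μ / 2 * ‖z‖ ^ 2))
    (xs : E) (hmin : ∀ z, f xs ≤ f z) (z : E) :
    f xs + μ / 2 * ‖z - xs‖ ^ 2 ≤ f z := by
  have key : ∀ t : ℝ, 0 < t → t < 1 → f xs + μ / 2 * ‖z - xs‖ ^ 2 * (1 - t) ≤ f z := by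
    intro t ht0 ht1
    have h2 := hconv.2 (Set.mem_univ xs) (Set.mem_univ z)
      (by linarith : (0:ℝ) ≤ 1 - t) ht0.le (by ring)
    have hq : ‖(1 - t) • xs + t • z‖ ^ 2
        = (1 - t) * ‖xs‖ ^ 2 + t * ‖z‖ ^ 2 - t * (1 - t) * ‖z - xs‖ ^ 2 := by
      have e1 := norm_add_sq_real ((1 - t) • xs) (t • z)
      have e2 := norm_sub_sq_real z xs
      rw [norm_smul, norm_smul, real_inner_smul_left, real_inner_smul_right] at e1
      rw [Real.norm_eq_abs, Real.norm_eq_abs, abs_of_nonneg (by linarith : (0:ℝ) ≤ 1 - t),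
        abs_of_nonneg ht0.le] at e1
      rw [mul_pow, mul_pow] at e1
      rw [e1, e2]; rw [real_inner_comm z xs] at *; ring
    have hmin2 := hmin ((1 - t) • xs + t • z)
    simp only [smul_eq_mul] at h2
    nlinarith [h2, hmin2, hq]
  rcases le_or_gt (f xs + μ / 2 * ‖z - xs‖ ^ 2) (f z) with h | h
  · exact h
  · exfalso
    set c := μ / 2 * ‖z - xs‖ ^ 2 with hc
    have hc0 : 0 ≤ c := by positivity
    set ε := f xs + c - f z with hε
    have hε0 : 0 < ε := by linarith
    rcases eq_or_lt_of_le hc0 with hc' | hc'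
    · have := key (1/2) (by norm_num) (by norm_num)
      rw [← hc'] at this; simp at this; linarith [hmin z]
    · have htpos : 0 < min (1/2) (ε / (2 * c)) := by positivity
      have htlt : min (1/2) (ε / (2 * c)) < 1 :=
        lt_of_le_of_lt (min_le_left _ _) (by norm_num)
      have := key _ htpos htlt
      have h3 : c * min (1/2) (ε / (2 * c)) ≤ c * (ε / (2 * c)) :=
        mul_le_mul_of_nonneg_left (min_le_right _ _) hc0
      have h4 : c * (ε / (2 * c)) = ε / 2 := by field_simp
      nlinarith

/-- **Statement 9** (Lemma 2: lower bound on the CODER estimation sequence).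

The CODER iteration on `ℝ^d` with `m` consecutive coordinate blocks (encoded by the
monotone block map `blk : Fin d → Fin m`): `a₀ = A₀ = 0`, `p₀ = F(x₀)`, and for
`k ≥ 1`: `a_k = (1+γA_{k−1})/(2L)`, `A_k = A_{k−1} + a_k`,
`p_kⁱ = Fⁱ(x_k¹,…,x_k^{i−1}, x_{k−1}ⁱ,…,x_{k−1}ᵐ)`,
`q_kⁱ = p_kⁱ + (a_{k−1}/a_k)(Fⁱ(x_{k−1}) − p_{k−1}ⁱ)`, and `x_k` minimizes the
estimation sequence `ψ_k(·; u)` (equivalently, each `x_kⁱ` minimizes `ψ_kⁱ`, since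
`g` is block-separable). Here `g(x) = ∑ᵢ gⁱ(xⁱ)` with each `gⁱ` depending only on
the coordinates of block `i` and `γ`-strongly convex there. Then for every
`u ∈ ℝ^d` and `k ≥ 1`:
`ψ_k(x_k; u) ≥ ∑_{j=1}^k a_j(⟨F(x_j), x_j − u⟩ + g(x_j) − g(u))
  − ((1+γA_k)/4)‖u − x_k‖²
  + ∑_{j=1}^k [((1+γA_{j−1})/4)‖x_j − x_{j−1}‖² − (a_j²/(1+γA_j))‖F(x_j) − p_j‖²]`. -/
theorem stmt9 {d m : ℕ} (blk : Fin d → Fin m) (hblk : Monotone blk)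
    (F : EuclideanSpace ℝ (Fin d) → EuclideanSpace ℝ (Fin d))
    (γ L : ℝ) (hγ : 0 ≤ γ) (hL : 0 < L)
    -- the block components of the separable regularizer g
    (g : Fin m → EuclideanSpace ℝ (Fin d) → ℝ)
    (hgdep : ∀ (i : Fin m) (z w : EuclideanSpace ℝ (Fin d)),
      (∀ j, blk j = i → z j = w j) → g i z = g i w)
    (hgsc : ∀ i : Fin m, ConvexOn ℝ Set.univ (fun z : EuclideanSpace ℝ (Fin d) =>
      g i z - γ / 2 * ∑ j ∈ Finset.univ.filter (fun j => blk j = i), (z j) ^ 2))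
    (G : EuclideanSpace ℝ (Fin d) → ℝ) (hG : ∀ z, G z = ∑ i, g i z)
    -- step sizes
    (a A : ℕ → ℝ) (ha0 : a 0 = 0) (hA0 : A 0 = 0)
    (ha : ∀ k : ℕ, a (k + 1) = (1 + γ * A k) / (2 * L))
    (hA : ∀ k : ℕ, A (k + 1) = A k + a (k + 1))
    -- iterates, cyclic coordinate gradients, and extrapolated gradients
    (x p q : ℕ → EuclideanSpace ℝ (Fin d))
    (hp0 : p 0 = F (x 0))
    (hp : ∀ (k : ℕ) (j : Fin d),
      p (k + 1) j = F (WithLp.toLp 2 (fun j' => if blk j' < blk j then x (k + 1) j' else x k j')) j)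
    (hq : ∀ (k : ℕ) (j : Fin d),
      q (k + 1) j = p (k + 1) j + a k / a (k + 1) * (F (x k) j - p k j))
    -- estimation sequence and its minimization property
    (ψ : ℕ → EuclideanSpace ℝ (Fin d) → EuclideanSpace ℝ (Fin d) → ℝ)
    (hψ : ∀ (k : ℕ) (z u : EuclideanSpace ℝ (Fin d)),
      ψ k z u = ∑ j ∈ Finset.Icc 1 k, a j * (⟪q j, z - u⟫ + G z - G u)
        + 1 / 2 * ‖z - x 0‖ ^ 2)
    (hxmin : ∀ k : ℕ, 1 ≤ k → ∀ u z : EuclideanSpace ℝ (Fin d), ψ k (x k) u ≤ ψ k z u) :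
    ∀ (u : EuclideanSpace ℝ (Fin d)) (k : ℕ), 1 ≤ k →
      ψ k (x k) u ≥
        (∑ j ∈ Finset.Icc 1 k, a j * (⟪F (x j), x j - u⟫ + G (x j) - G u))
        - (1 + γ * A k) / 4 * ‖u - x k‖ ^ 2
        + ∑ j ∈ Finset.Icc 1 k,
            ((1 + γ * A (j - 1)) / 4 * ‖x j - x (j - 1)‖ ^ 2
              - a j ^ 2 / (1 + γ * A j) * ‖F (x j) - p j‖ ^ 2) := by
  classical
  -- basic positivity facts
  have hApos : ∀ k, 0 ≤ A k := by
    intro k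
    induction k with
    | zero => rw [hA0]
    | succ n ih =>
        have h1 : 0 < 1 + γ * A n := by nlinarith
        have h2 : (0:ℝ) < 2 * L := by linarith
        have := div_pos h1 h2
        rw [hA n, ha n]; linarith
  have hμpos : ∀ k, 0 < 1 + γ * A k := by intro k; nlinarith [hApos k]
  have hapos : ∀ k, 0 < a (k + 1) := by
    intro k; rw [ha k]; exact div_pos (hμpos k) (by linarith)
  have hanneg : ∀ k, 0 ≤ a k := by
    intro k; cases k with
    | zero => rw [ha0]
    | succ n => exact (hapos n).le
  have hAsum : ∀ k, A k = ∑ j ∈ Finset.Icc 1 k, a j := by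
    intro k
    induction k with
    | zero => simp [hA0]
    | succ n ih =>
        rw [hA n, Finset.sum_Icc_succ_top (Nat.le_add_left 1 n), ih]
  -- norms in Euclidean space
  have hnormsq : ∀ z : EuclideanSpace ℝ (Fin d), ‖z‖ ^ 2 = ∑ j, (z j) ^ 2 := by
    intro z
    rw [EuclideanSpace.norm_eq, Real.sq_sqrt (by positivity)]
    simp [Real.norm_eq_abs, sq_abs]
  -- convexity of G - γ/2 ‖·‖²
  have hGconv : ConvexOn ℝ Set.univ
      (fun z : EuclideanSpace ℝ (Fin d) => G z - γ / 2 * ‖z‖ ^ 2) := by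
    have h := convexOn_sum' Finset.univ
      (fun i z => g i z - γ / 2 * ∑ j ∈ Finset.univ.filter (fun j => blk j = i), (z j) ^ 2)
      (fun i _ => hgsc i)
    have hfun : (fun z : EuclideanSpace ℝ (Fin d) =>
        ∑ i, (g i z - γ / 2 * ∑ j ∈ Finset.univ.filter (fun j => blk j = i), (z j) ^ 2))
        = fun z => G z - γ / 2 * ‖z‖ ^ 2 := by
      funext z
      rw [Finset.sum_sub_distrib, ← Finset.mul_sum,
        Finset.sum_fiberwise Finset.univ blk (fun j => (z j) ^ 2), hG, hnormsq]
    rwa [hfun] at h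
  -- strong convexity of the estimation sequence
  have hconvψ : ∀ (k : ℕ) (u : EuclideanSpace ℝ (Fin d)),
      ConvexOn ℝ Set.univ (fun z => ψ k z u - (1 + γ * A k) / 2 * ‖z‖ ^ 2) := by
    intro k u
    have hbase := hGconv.smul (hApos k)
    have haff := convexOn_affine' ((∑ j ∈ Finset.Icc 1 k, a j • q j) - x 0)
      (-(∑ j ∈ Finset.Icc 1 k, a j * (⟪q j, u⟫ + G u)) + 1 / 2 * ‖x 0‖ ^ 2)
    have hsum := hbase.add haff
    have hfun : (fun z : EuclideanSpace ℝ (Fin d) =>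
          A k • (G z - γ / 2 * ‖z‖ ^ 2)) +
          (fun z => ⟪(∑ j ∈ Finset.Icc 1 k, a j • q j) - x 0, z⟫ +
            (-(∑ j ∈ Finset.Icc 1 k, a j * (⟪q j, u⟫ + G u)) + 1 / 2 * ‖x 0‖ ^ 2))
        = fun z => ψ k z u - (1 + γ * A k) / 2 * ‖z‖ ^ 2 := by
      funext z
      simp only [Pi.add_apply, smul_eq_mul]
      rw [hψ k z u, norm_sub_sq_real]
      simp only [inner_sub_right]
      have hs : ∑ j ∈ Finset.Icc 1 k, a j * (⟪q j, z⟫ - ⟪q j, u⟫ + G z - G u)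
          = ⟪∑ j ∈ Finset.Icc 1 k, a j • q j, z⟫
            - (∑ j ∈ Finset.Icc 1 k, a j * (⟪q j, u⟫ + G u))
            + (∑ j ∈ Finset.Icc 1 k, a j) * G z := by
        rw [sum_inner, Finset.sum_mul, ← Finset.sum_sub_distrib, ← Finset.sum_add_distrib]
        apply Finset.sum_congr rfl
        intro j _
        rw [real_inner_smul_left]; ring
      rw [inner_sub_left, hs, ← hAsum k, real_inner_comm (x 0) z]
      ring
    rwa [hfun] at hsum
  -- strong minimality
  have hsmin : ∀ (k : ℕ), 1 ≤ k → ∀ (u z : EuclideanSpace ℝ (Fin d)),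
      ψ k (x k) u + (1 + γ * A k) / 2 * ‖z - x k‖ ^ 2 ≤ ψ k z u := by
    intro k hk u z
    exact strong_min' (fun z => ψ k z u) (1 + γ * A k) (hμpos k).le
      (hconvψ k u) (x k) (hxmin k hk u) z
  -- vector identity for q
  have hqv : ∀ k : ℕ, a (k + 1) • q (k + 1)
      = a (k + 1) • p (k + 1) + a k • (F (x k) - p k) := by
    intro k
    ext j
    have hne : a (k + 1) ≠ 0 := (hapos k).ne'
    simp only [PiLp.add_apply, PiLp.smul_apply, PiLp.sub_apply, smul_eq_mul, hq k j]
    field_simp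
  -- inner product expansion for q
  have hinner : ∀ (k : ℕ) (w : EuclideanSpace ℝ (Fin d)),
      a (k + 1) * ⟪q (k + 1), w⟫
        = a (k + 1) * ⟪F (x (k + 1)), w⟫
          - a (k + 1) * ⟪F (x (k + 1)) - p (k + 1), w⟫
          + a k * ⟪F (x k) - p k, w⟫ := by
    intro k w
    have h := congrArg (fun v => (⟪v, w⟫ : ℝ)) (hqv k)
    simp only [inner_add_left, real_inner_smul_left] at h
    rw [h]
    simp only [inner_sub_left]
    ring
  -- recursion for ψ
  have hψrec : ∀ (k : ℕ) (z u : EuclideanSpace ℝ (Fin d)),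
      ψ (k + 1) z u = ψ k z u + a (k + 1) * (⟪q (k + 1), z - u⟫ + G z - G u) := by
    intro k z u
    rw [hψ, hψ, Finset.sum_Icc_succ_top (Nat.le_add_left 1 k)]
    ring
  intro u
  -- strengthened induction invariant
  have main : ∀ k : ℕ, 1 ≤ k →
      (∑ j ∈ Finset.Icc 1 k, a j * (⟪F (x j), x j - u⟫ + G (x j) - G u))
      + (∑ j ∈ Finset.Icc 1 k,
          ((1 + γ * A (j - 1)) / 4 * ‖x j - x (j - 1)‖ ^ 2
            - a j ^ 2 / (1 + γ * A j) * ‖F (x j) - p j‖ ^ 2))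
      + (a k ^ 2 / (1 + γ * A k) * ‖F (x k) - p k‖ ^ 2
          - a k * ⟪F (x k) - p k, x k - u⟫ + 1 / 4 * ‖x 1 - x 0‖ ^ 2)
      ≤ ψ k (x k) u := by
    intro k hk
    induction k, hk using Nat.le_induction with
    | base =>
        have h1 := hinner 0 (x 1 - u)
        rw [ha0] at h1
        simp only [zero_mul, add_zero] at h1
        rw [hψ]
        simp only [Finset.Icc_self, Finset.sum_singleton, Nat.sub_self, hA0]
        nlinarith [h1]
    | succ k hk ih =>
        have hrec := hψrec k (x (k + 1)) u
        have hsm := hsmin k hk u (x (k + 1))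
        have h1 := hinner k (x (k + 1) - u)
        have hy := young' (1 + γ * A k) (a k) (hμpos k) (F (x k) - p k) (x (k + 1) - x k)
        have hsplit : (⟪F (x k) - p k, x (k + 1) - u⟫ : ℝ)
            = ⟪F (x k) - p k, x k - u⟫ + ⟪F (x k) - p k, x (k + 1) - x k⟫ := by
          rw [← inner_add_right]
          congr 1
          abel
        rw [hsplit] at h1
        have e1 : a (k + 1) * (⟪q (k + 1), x (k + 1) - u⟫ + G (x (k + 1)) - G u)
            = a (k + 1) * (⟪F (x (k + 1)), x (k + 1) - u⟫ + G (x (k + 1)) - G u)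
              - a (k + 1) * ⟪F (x (k + 1)) - p (k + 1), x (k + 1) - u⟫
              + a k * ⟪F (x k) - p k, x k - u⟫
              + a k * ⟪F (x k) - p k, x (k + 1) - x k⟫ := by
          linear_combination h1
        rw [Finset.sum_Icc_succ_top (Nat.le_add_left 1 k),
          Finset.sum_Icc_succ_top (Nat.le_add_left 1 k)]
        simp only [Nat.add_sub_cancel]
        linarith [ih, hrec, hsm, e1, hy]
  intro k hk
  have hmk := main k hk
  have hy := young' (1 + γ * A k) (a k) (hμpos k) (F (x k) - p k) (u - x k)
  have hneg : (⟪F (x k) - p k, u - x k⟫ : ℝ) = -⟪F (x k) - p k, x k - u⟫ := by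
    rw [← inner_neg_right]
    congr 1
    abel
  rw [hneg] at hy
  have hnn : (0:ℝ) ≤ 1 / 4 * ‖x 1 - x 0‖ ^ 2 := by positivity
  rw [ge_iff_le]
  rw [norm_sub_rev u (x k)] at *
  linarith
end
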